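/- In the setting of the previous statement (finite-horizon MDP with fixed policy h and value functions W_t), suppose there exist a time τ and a state s* ∈ S_τ reachable with positive probability such that h_τ(s*) is NOT a maximizer of a ↦ r_τ(s*, a) + E_{s'∼K_τ(s*,a)}[W_{τ+1}(s')], and τ is the largest such time. Then the policy g equal to h everywhere except g_τ(s*) ∈ argmax of this map strictly improves the expected reward-to-go from (τ, s*): its reward-to-go strictly exceeds that of h at (τ, s*). -/
import Mathlib


/-- Expected total reward-to-go of a (Markov, deterministic) policy `h`
in a finite-horizon MDP, with `n` remaining decision steps starting at time `t`. -/
def evalJ {S : ℕ → Type} [∀ t, Fintype (S t)] {A : Type}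
    (K : (t : ℕ) → S t → A → S (t + 1) → ℝ)
    (r : (t : ℕ) → S t → A → ℝ)
    (h : (t : ℕ) → S t → A) : (n : ℕ) → (t : ℕ) → S t → ℝ
  | 0, _, _ => 0
  | n + 1, t, s =>
      r t s (h t s) + ∑ s' : S (t + 1), K t s (h t s) s' * evalJ K r h n (t + 1) s'

lemma evalJ_congr {S : ℕ → Type} [∀ t, Fintype (S t)] {A : Type}
    (K : (t : ℕ) → S t → A → S (t + 1) → ℝ)
    (r : (t : ℕ) → S t → A → ℝ)
    (g h : (t : ℕ) → S t → A) :
    ∀ (n t : ℕ), (∀ u, t ≤ u → ∀ s : S u, g u s = h u s) →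
      ∀ s : S t, evalJ K r g n t s = evalJ K r h n t s := by
  intro n
  induction n with
  | zero => intro t _ s; rfl
  | succ n ih =>
    intro t hag s
    simp only [evalJ, hag t le_rfl s]
    congr 1
    apply Finset.sum_congr rfl
    intro s' _
    rw [ih (t+1) (fun u hu => hag u (by omega))]

lemma W_eq_evalJ {S : ℕ → Type} [∀ t, Fintype (S t)] {A : Type}
    (T : ℕ)
    (K : (t : ℕ) → S t → A → S (t + 1) → ℝ)
    (r : (t : ℕ) → S t → A → ℝ)
    (h : (t : ℕ) → S t → A)
    (W : (t : ℕ) → S t → ℝ)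
    (hWend : ∀ s, W (T + 1) s = 0)
    (hWrec : ∀ t, t ≤ T → ∀ s, W t s
      = r t s (h t s) + ∑ s' : S (t + 1), K t s (h t s) s' * W (t + 1) s') :
    ∀ (n t : ℕ), t + n = T + 1 → ∀ s : S t, W t s = evalJ K r h n t s := by
  intro n
  induction n with
  | zero =>
    intro t ht s
    have : t = T + 1 := by omega
    subst this; simpa [evalJ] using hWend s
  | succ n ih =>
    intro t ht s
    rw [hWrec t (by omega) s]
    simp only [evalJ]
    congr 1
    apply Finset.sum_congr rfl
    intro s' _
    rw [ih (t+1) (by omega)]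

/-- necessity / strict one-step improvement.  If the stage-wise argmax
condition fails at the latest time `τ` (at state `s*`), then the one-step deviation
`g` (equal to `h` except that it plays a maximizer `a*` at `(τ, s*)`) strictly
improves the expected reward-to-go from `(τ, s*)`. -/
theorem stmt_8 {S : ℕ → Type} [∀ t, Fintype (S t)] {A : Type} [Fintype A] [Nonempty A]
    (T : ℕ)
    (K : (t : ℕ) → S t → A → S (t + 1) → ℝ)
    (hK0 : ∀ t s a s', 0 ≤ K t s a s') (hK1 : ∀ t s a, ∑ s', K t s a s' = 1)
    (r : (t : ℕ) → S t → A → ℝ)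
    (h : (t : ℕ) → S t → A)
    (W : (t : ℕ) → S t → ℝ)
    (hWend : ∀ s, W (T + 1) s = 0)
    (hWrec : ∀ t, t ≤ T → ∀ s, W t s
      = r t s (h t s) + ∑ s' : S (t + 1), K t s (h t s) s' * W (t + 1) s')
    (τ : ℕ) (hτ : τ ≤ T) (sstar : S τ)
    (hlargest : ∀ t, τ < t → t ≤ T → ∀ s : S t, ∀ a : A,
      r t s a + ∑ s' : S (t + 1), K t s a s' * W (t + 1) s'
        ≤ r t s (h t s) + ∑ s' : S (t + 1), K t s (h t s) s' * W (t + 1) s')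
    (hnot : ¬ ∀ a : A,
      r τ sstar a + ∑ s' : S (τ + 1), K τ sstar a s' * W (τ + 1) s'
        ≤ r τ sstar (h τ sstar)
          + ∑ s' : S (τ + 1), K τ sstar (h τ sstar) s' * W (τ + 1) s')
    (astar : A)
    (hbest : ∀ a : A,
      r τ sstar a + ∑ s' : S (τ + 1), K τ sstar a s' * W (τ + 1) s'
        ≤ r τ sstar astar + ∑ s' : S (τ + 1), K τ sstar astar s' * W (τ + 1) s')
    (g : (t : ℕ) → S t → A)
    (hg1 : g τ sstar = astar)
    (hg2 : ∀ t, t ≠ τ → ∀ s : S t, g t s = h t s)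
    (hg3 : ∀ s : S τ, s ≠ sstar → g τ s = h τ s) :
    evalJ K r h (T + 1 - τ) τ sstar < evalJ K r g (T + 1 - τ) τ sstar := by

  have hn : T + 1 - τ = (T - τ) + 1 := by omega
  have hWe := W_eq_evalJ T K r h W hWend hWrec
  have hgtail : ∀ s' : S (τ+1), evalJ K r g (T - τ) (τ+1) s' = W (τ+1) s' := by
    intro s'
    rw [evalJ_congr K r g h (T - τ) (τ+1) (fun u hu s => hg2 u (by omega) s) s']
    rw [← hWe (T - τ) (τ+1) (by omega) s']
  have hlhs : evalJ K r h (T + 1 - τ) τ sstar = W τ sstar :=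
    (hWe (T + 1 - τ) τ (by omega) sstar).symm
  have hrhs : evalJ K r g (T + 1 - τ) τ sstar
      = r τ sstar astar + ∑ s' : S (τ + 1), K τ sstar astar s' * W (τ + 1) s' := by
    rw [hn]
    simp only [evalJ, hg1]
    congr 1
    apply Finset.sum_congr rfl
    intro s' _
    rw [hgtail s']
  rw [hlhs, hrhs, hWrec τ hτ sstar]
  push_neg at hnot
  obtain ⟨a, ha⟩ := hnot
  exact lt_of_lt_of_le ha (hbest a)
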